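/- Let P be the 5×5 real symmetric matrix indexed by Fin 5 with entries P(0,1) = P(1,0) = 19/40, P(1,2) = P(2,1) = 1/40, P(3,4) = P(4,3) = 1/2, and all other entries 0. Then the function f : ℝ⁵ → ℝ defined by f(x) = xᵀ P x is not convex on ℝ⁵. -/

import Mathlib

open Matrix

noncomputable def Pmat : Matrix (Fin 5) (Fin 5) ℝ :=
  !![0, 19/40, 0, 0, 0;
     19/40, 0, 1/40, 0, 0;
     0, 1/40, 0, 0, 0;
     0, 0, 0, 0, 1/2;
     0, 0, 0, 1/2, 0]

theorem quadratic_form_Pmat_not_convex :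
    ¬ ConvexOn ℝ (Set.univ : Set (Fin 5 → ℝ)) (fun x => x ⬝ᵥ Pmat.mulVec x) := by
  intro h
  have key := h.2 (Set.mem_univ (![1,-1,0,0,0] : Fin 5 → ℝ))
    (Set.mem_univ (![-1,1,0,0,0] : Fin 5 → ℝ))
    (by norm_num : (0:ℝ) ≤ 1/2) (by norm_num : (0:ℝ) ≤ 1/2) (by norm_num)
  simp only [Pmat, mulVec, dotProduct, Fin.sum_univ_five] at key
  norm_num [Fin.isValue, Matrix.cons_val_zero, Matrix.cons_val_one, Matrix.head_cons,
    Pi.add_apply, Pi.smul_apply, smul_eq_mul, Matrix.cons_val_fin_one,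
    Matrix.cons_val_two, Matrix.cons_val_three, Matrix.cons_val_four, Matrix.tail_cons] at key
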